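/- Let R be an infinite integral domain with fraction field K, n ≥ 2, and let u₁,…,u_{k-1} span a proper subspace U ⊊ V₂ = span(e₂,…,eₙ) ⊆ Kⁿ. Then the group EL_n(R) ∩ (pointwise stabilizer in GL_n(K) of the lines K·e₁ and K·(uᵢ + tᵢe₁) for given tᵢ ∈ K) contains an infinite subgroup isomorphic to the additive group of R (after clearing denominators of a functional vanishing on U). -/

import Mathlib

open Matrix

section Aux

set_option linter.unusedSectionVars false

variable {n : Type*} [Fintype n] [DecidableEq n] {K : Type*} [Field K]

lemma aux_vecMulVec_mul (x y x' y' : n → K) :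
    vecMulVec x y * vecMulVec x' y' = (y ⬝ᵥ x') • vecMulVec x y' := by
  ext i j
  simp [Matrix.mul_apply, vecMulVec_apply, dotProduct, Finset.sum_mul, Finset.mul_sum]
  congr 1; ext k; ring

lemma aux_vecMulVec_mulVec (x y v : n → K) :
    (vecMulVec x y).mulVec v = (y ⬝ᵥ v) • x := by
  funext i
  simp only [mulVec, vecMulVec_apply, dotProduct, Pi.smul_apply, smul_eq_mul, Finset.sum_mul]
  exact Finset.sum_congr rfl fun k _ => by ring

lemma aux_vecMulVec_smul_right (x y : n → K) (r : K) :
    vecMulVec x (r • y) = r • vecMulVec x y := by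
  ext i j; simp [vecMulVec_apply]; ring

variable (e0 : n) (c : n → K)

/-- the transvection matrix -/
def auxM (r : K) : Matrix n n K := 1 + r • vecMulVec (Pi.single e0 1) c

lemma auxM_mul (hc0 : c e0 = 0) (r s : K) :
    auxM e0 c r * auxM e0 c s = auxM e0 c (r + s) := by
  simp only [auxM, add_mul, mul_add, one_mul, mul_one, Matrix.smul_mul, Matrix.mul_smul,
    aux_vecMulVec_mul]
  have : c ⬝ᵥ Pi.single e0 1 = 0 := by simp [hc0]
  rw [this]
  simp [add_smul]
  abel

lemma auxM_zero : auxM e0 c 0 = 1 := by simp [auxM]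

/-- as a unit -/
def auxT (hc0 : c e0 = 0) (r : K) : Matrix.GeneralLinearGroup n K :=
  ⟨auxM e0 c r, auxM e0 c (-r),
    by rw [auxM_mul e0 c hc0, add_neg_cancel, auxM_zero],
    by rw [auxM_mul e0 c hc0, neg_add_cancel, auxM_zero]⟩

lemma auxT_coe (hc0 : c e0 = 0) (r : K) :
    (auxT e0 c hc0 r : Matrix n n K) = auxM e0 c r := rfl

lemma auxM_mulVec (r : K) (v : n → K) (hv : c ⬝ᵥ v = 0) :
    (auxM e0 c r).mulVec v = v := by
  simp [auxM, Matrix.add_mulVec, Matrix.smul_mulVec, aux_vecMulVec_mulVec, hv]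

lemma aux_sum_stdBasis (s : Finset n) (hs : e0 ∉ s) (g : n → K) :
    ∑ j ∈ s, Matrix.single e0 j (g j)
      = vecMulVec (Pi.single e0 1) (s.piecewise g 0) := by
  classical
  ext i j
  rw [Matrix.sum_apply]
  by_cases hi : i = e0
  · subst hi
    by_cases hj : j ∈ s
    · rw [Finset.sum_eq_single j]
      · simp [Matrix.single, vecMulVec_apply, Finset.piecewise_eq_of_mem _ _ _ hj]
      · intro b _ hb; simp [Matrix.single, hb]
      · intro h; exact absurd hj h
    · rw [Finset.sum_eq_zero]
      · simp [vecMulVec_apply, Finset.piecewise_eq_of_notMem _ _ _ hj]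
      · intro b hb
        have : b ≠ j := fun h => hj (h ▸ hb)
        simp [Matrix.single, this]
  · rw [Finset.sum_eq_zero]
    · simp [vecMulVec_apply, Pi.single_apply, Ne.symm hi]
    · intro b _; simp [Matrix.single, Ne.symm hi]

lemma aux_piecewise_e0 (s : Finset n) (hs : e0 ∉ s) (g : n → K) :
    (s.piecewise g 0) e0 = 0 := by
  simp [Finset.piecewise_eq_of_notMem _ _ _ hs]

lemma aux_single_vecMulVec (j : n) (y : K) :
    vecMulVec (Pi.single e0 1 : n → K) (Pi.single j y) = Matrix.single e0 j y := by
  ext i k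
  simp [vecMulVec_apply, Matrix.single, Pi.single_apply, ite_and, eq_comm]
  split_ifs <;> simp_all

lemma auxT_eq_of_eq {c₁ c₂ : n → K} (h : c₁ = c₂) (h₁ : c₁ e0 = 0) (h₂ : c₂ e0 = 0) (r : K) :
    auxT e0 c₁ h₁ r = auxT e0 c₂ h₂ r := by
  subst h; rfl

lemma aux_mem_closure (G : Subgroup (Matrix.GeneralLinearGroup n K))
    (s : Finset n) (hs : e0 ∉ s) (g : n → K)
    (hg : ∀ j ∈ s, ∀ (h : (Pi.single j (g j) : n → K) e0 = 0),
      auxT e0 (Pi.single j (g j)) h 1 ∈ G) :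
    auxT e0 (s.piecewise g 0) (aux_piecewise_e0 e0 s hs g) 1 ∈ G := by
  classical
  induction s using Finset.induction with
  | empty =>
    have : auxT e0 ((∅ : Finset n).piecewise g 0)
        (aux_piecewise_e0 e0 ∅ (Finset.notMem_empty e0) g) 1 = 1 := by
      apply Units.ext
      show auxM e0 _ 1 = 1
      rw [Finset.piecewise_empty]
      have : vecMulVec (Pi.single e0 1 : n → K) (0 : n → K) = 0 := by
        ext i k; simp [vecMulVec_apply]
      simp [auxM, this]
    rw [this]
    exact one_mem G
  | @insert a s' ha ih =>
    have hae0 : e0 ∉ s' := fun h => hs (Finset.mem_insert_of_mem h)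
    have hae : a ≠ e0 := fun h => hs (h ▸ Finset.mem_insert_self a s')
    have hsingle : (Pi.single a (g a) : n → K) e0 = 0 := Pi.single_eq_of_ne' hae _
    have key : auxT e0 ((insert a s').piecewise g 0)
        (aux_piecewise_e0 e0 _ hs g) 1
        = auxT e0 (Pi.single a (g a)) hsingle 1
          * auxT e0 (s'.piecewise g 0) (aux_piecewise_e0 e0 s' hae0 g) 1 := by
      apply Units.ext
      show auxM e0 _ 1 = auxM e0 _ 1 * auxM e0 _ 1
      simp only [auxM, one_smul, add_mul, mul_add, one_mul, mul_one, aux_vecMulVec_mul]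
      have hd : (Pi.single a (g a) : n → K) ⬝ᵥ (Pi.single e0 1) = 0 := by
        simp [dotProduct, Pi.single_apply, hae, Finset.sum_ite_eq]
        intro h; exact absurd h.symm hae
      rw [hd, zero_smul, add_zero, add_assoc]
      congr 1
      have : vecMulVec (Pi.single e0 1 : n → K) (Pi.single a (g a))
          + vecMulVec (Pi.single e0 1 : n → K) (s'.piecewise g 0)
          = vecMulVec (Pi.single e0 1 : n → K) (Pi.single a (g a) + s'.piecewise g 0) := by
        ext i k; simp [vecMulVec_apply, mul_add]
      rw [this]
      ext i k
      simp only [vecMulVec_apply, Finset.piecewise, Finset.mem_insert, Pi.add_apply,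
        Pi.single_apply]
      by_cases hja : k = a
      · subst hja; simp [ha]
      · by_cases hjs : k ∈ s' <;> simp [hja, hjs]
    rw [key]
    exact mul_mem (hg a (Finset.mem_insert_self a s') hsingle)
      (ih hae0 (fun j hj => hg j (Finset.mem_insert_of_mem hj)))

end Aux
/-- Let `R` be an infinite integral domain with fraction field `K`, `n ≥ 2`, and let
`u₁, …, u_{k-1}` span a proper subspace `U ⊊ V₂ = span(e₂,…,eₙ) ⊆ Kⁿ`. Then, for any
scalars `tᵢ ∈ K`, the intersection of `EL_n(R)` with the stabilizer in `GL_n(K)` of the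
lines `K·e₁` and `K·(uᵢ + tᵢe₁)` contains an infinite subgroup isomorphic to the
additive group of `R`: there is an injective homomorphism `r ↦ T_r` from `(R,+)` landing
in it. -/
theorem stmt_16 (R : Type*) [CommRing R] [IsDomain R] [Infinite R]
    (K : Type*) [Field K] [Algebra R K] [IsFractionRing R K]
    (n : ℕ) (hn : 2 ≤ n) (m : ℕ) (u : Fin m → (Fin n → K))
    (hu : ∀ i, u i ⟨0, by omega⟩ = 0)
    (hU : Submodule.span K (Set.range u) <
      LinearMap.ker (LinearMap.proj (⟨0, by omega⟩ : Fin n) : (Fin n → K) →ₗ[K] K))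
    (t : Fin m → K) :
    ∃ T : Multiplicative R →* Matrix.GeneralLinearGroup (Fin n) K,
      Function.Injective T ∧
      ∀ r : R,
        T (Multiplicative.ofAdd r) ∈
          Subgroup.closure {g : Matrix.GeneralLinearGroup (Fin n) K |
            ∃ (i j : Fin n) (x : R), i ≠ j ∧
              (g : Matrix (Fin n) (Fin n) K)
                = 1 + Matrix.single i j (algebraMap R K x)} ∧
        Submodule.map (Matrix.mulVecLin
            ((T (Multiplicative.ofAdd r) : Matrix (Fin n) (Fin n) K)))
            (Submodule.span K {(Pi.single (⟨0, by omega⟩ : Fin n) 1 : Fin n → K)})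
          = Submodule.span K {(Pi.single (⟨0, by omega⟩ : Fin n) 1 : Fin n → K)} ∧
        ∀ i : Fin m,
          Submodule.map (Matrix.mulVecLin
              ((T (Multiplicative.ofAdd r) : Matrix (Fin n) (Fin n) K)))
              (Submodule.span K
                {u i + t i • (Pi.single (⟨0, by omega⟩ : Fin n) 1 : Fin n → K)})
            = Submodule.span K
                {u i + t i • (Pi.single (⟨0, by omega⟩ : Fin n) 1 : Fin n → K)} := by

  classical
  set e0 : Fin n := ⟨0, by omega⟩ with he0
  -- find v in the kernel not in the span
  obtain ⟨v, hvker, hvspan⟩ := SetLike.exists_of_lt hU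
  -- the span together with e0
  set S' : Submodule K (Fin n → K) :=
    Submodule.span K (Set.range u) ⊔ Submodule.span K {(Pi.single e0 1 : Fin n → K)} with hS'
  have huker : ∀ i, u i ∈ LinearMap.ker
      (LinearMap.proj e0 : (Fin n → K) →ₗ[K] K) := by
    intro i; simpa using hu i
  have hvS' : v ∉ S' := by
    intro hv
    rw [hS', Submodule.mem_sup] at hv
    obtain ⟨p, hp, q, hq, hpq⟩ := hv
    obtain ⟨k, rfl⟩ := Submodule.mem_span_singleton.mp hq
    have hp0 : p e0 = 0 := by
      have : p ∈ LinearMap.ker (LinearMap.proj e0 : (Fin n → K) →ₗ[K] K) := by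
        refine Submodule.span_le.mpr ?_ hp
        rintro x ⟨i, rfl⟩; exact huker i
      simpa using this
    have hv0 : v e0 = 0 := by simpa using hvker
    have hk : k = 0 := by
      have := congrFun hpq e0
      have := congrFun hpq e0
      simp [hp0, hv0, Pi.single_eq_same] at this
      exact this

    rw [hk] at hpq
    simp at hpq
    exact hvspan (hpq ▸ hp)
  obtain ⟨f, hfv, hfS'⟩ := S'.exists_dual_map_eq_bot_of_notMem hvS' inferInstance
  have hfzero : ∀ x ∈ S', f x = 0 := by
    intro x hx
    have : f x ∈ S'.map f := Submodule.mem_map_of_mem hx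
    rwa [hfS', Submodule.mem_bot] at this
  set w : Fin n → K := fun j => f (Pi.single j 1) with hw
  have hfapp : ∀ x : Fin n → K, f x = w ⬝ᵥ x := by
    intro x
    rw [LinearMap.pi_apply_eq_sum_univ f x]
    simp only [dotProduct, hw, smul_eq_mul]
    refine Finset.sum_congr rfl fun j _ => ?_
    rw [mul_comm]
    congr 1
    congr 1
    funext k
    simp [Pi.single_apply, eq_comm]
  have hwe0 : w e0 = 0 := hfzero _ (Submodule.mem_sup_right (Submodule.mem_span_singleton_self _))
  have hwu : ∀ i, w ⬝ᵥ u i = 0 := by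
    intro i
    rw [← hfapp]
    exact hfzero _ (Submodule.mem_sup_left (Submodule.subset_span ⟨i, rfl⟩))
  obtain ⟨j₀, hj₀⟩ : ∃ j₀, w j₀ ≠ 0 := by
    by_contra h
    push_neg at h
    apply hfv
    rw [hfapp]
    simp [dotProduct, h]
  -- clear denominators
  obtain ⟨b, hb⟩ := IsLocalization.exist_integer_multiples (nonZeroDivisors R) Finset.univ w
  choose a ha using fun j => hb j (Finset.mem_univ j)
  set c : Fin n → K := fun j => algebraMap R K (a j) with hc
  have hcb : ∀ j, c j = algebraMap R K (b : R) * w j := by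
    intro j; rw [show c j = algebraMap R K (a j) from rfl, ha j, Algebra.smul_def]
  have hbne : algebraMap R K (b : R) ≠ 0 := by
    intro h
    have : (b : R) = 0 := IsFractionRing.injective R K (by simpa using h)
    exact nonZeroDivisors.coe_ne_zero b this
  have hc0 : c e0 = 0 := by rw [hcb, hwe0, mul_zero]
  have hcj₀ : c j₀ ≠ 0 := by rw [hcb]; exact mul_ne_zero hbne hj₀
  have hj₀e0 : j₀ ≠ e0 := fun h => hcj₀ (h ▸ hc0)
  have hcdot : ∀ x : Fin n → K, c ⬝ᵥ x = algebraMap R K (b : R) * (w ⬝ᵥ x) := by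
    intro x
    simp only [dotProduct, Finset.mul_sum]
    exact Finset.sum_congr rfl fun j _ => by rw [hcb]; ring
  have hcu : ∀ i, c ⬝ᵥ u i = 0 := fun i => by rw [hcdot, hwu, mul_zero]
  have hce0vec : c ⬝ᵥ (Pi.single e0 1 : Fin n → K) = 0 := by
    simp [dotProduct, Pi.single_apply, hc0]
  -- the homomorphism
  refine ⟨{ toFun := fun r => auxT e0 c hc0 (algebraMap R K r.toAdd)
            map_one' := ?_
            map_mul' := ?_ }, ?_, ?_⟩
  · apply Units.ext
    show auxM e0 c (algebraMap R K (0 : R)) = 1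
    rw [map_zero, auxM_zero]
  · intro x y
    apply Units.ext
    show auxM e0 c _ = auxM e0 c _ * auxM e0 c _
    rw [auxM_mul e0 c hc0, ← map_add]
    rfl
  · -- injectivity
    intro x y hxy
    have h1 : auxM e0 c (algebraMap R K x.toAdd) = auxM e0 c (algebraMap R K y.toAdd) :=
      congrArg Units.val hxy
    have h2 : (auxM e0 c (algebraMap R K x.toAdd)) e0 j₀
        = (auxM e0 c (algebraMap R K y.toAdd)) e0 j₀ := by rw [h1]
    simp only [auxM, Matrix.add_apply, Matrix.smul_apply, vecMulVec_apply,
      Pi.single_eq_same, one_mul, smul_eq_mul] at h2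
    have h3 : algebraMap R K x.toAdd * c j₀ = algebraMap R K y.toAdd * c j₀ :=
      add_left_cancel h2
    have h4 : algebraMap R K x.toAdd = algebraMap R K y.toAdd :=
      mul_right_cancel₀ hcj₀ h3
    have h5 : x.toAdd = y.toAdd := IsFractionRing.injective R K h4
    exact Multiplicative.toAdd.injective h5
  · intro r
    refine ⟨?_, ?_, ?_⟩
    · -- closure membership
      set g : Fin n → K := fun j => algebraMap R K (r * a j) with hg
      have hse0 : e0 ∉ Finset.univ.erase e0 := fun h => (Finset.mem_erase.mp h).1 rfl
      have hpc : (Finset.univ.erase e0).piecewise g 0 = algebraMap R K r • c := by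
        funext j
        by_cases hj : j = e0
        · subst hj
          rw [Finset.piecewise_eq_of_notMem _ _ _ hse0]
          simp [hc0]
        · rw [Finset.piecewise_eq_of_mem _ _ _
            (Finset.mem_erase.mpr ⟨hj, Finset.mem_univ j⟩)]
          show algebraMap R K (r * a j) = algebraMap R K r * c j
          rw [_root_.map_mul]
      have hstep : auxT e0 c hc0 (algebraMap R K r)
          = auxT e0 ((Finset.univ.erase e0).piecewise g 0)
              (aux_piecewise_e0 e0 _ hse0 g) 1 := by
        apply Units.ext
        show auxM e0 c (algebraMap R K r) = auxM e0 _ 1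
        rw [auxM, auxM, hpc, aux_vecMulVec_smul_right, one_smul]
      show auxT e0 c hc0 (algebraMap R K r) ∈ _
      rw [hstep]
      refine aux_mem_closure e0 _ _ hse0 g ?_
      intro j hj hsing
      apply Subgroup.subset_closure
      refine ⟨e0, j, r * a j, Ne.symm (Finset.mem_erase.mp hj).1, ?_⟩
      show auxM e0 (Pi.single j (g j)) 1 = _
      rw [auxM, one_smul, aux_single_vecMulVec]
    · -- fixing the line K e0
      rw [Submodule.map_span, Set.image_singleton]
      have hfix : Matrix.mulVecLin (auxM e0 c (algebraMap R K r))
          (Pi.single e0 1 : Fin n → K) = Pi.single e0 1 := by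
        rw [Matrix.mulVecLin_apply, auxM_mulVec e0 c _ _ hce0vec]
      exact congrArg _ (congrArg _ hfix)
    · intro i
      rw [Submodule.map_span, Set.image_singleton]
      have hfix : Matrix.mulVecLin (auxM e0 c (algebraMap R K r))
          (u i + t i • (Pi.single e0 1 : Fin n → K)) = u i + t i • (Pi.single e0 1 : Fin n → K) := by
        rw [Matrix.mulVecLin_apply, auxM_mulVec]
        rw [dotProduct_add, hcu i, dotProduct_smul, hce0vec, zero_add, smul_eq_mul, mul_zero]
      exact congrArg _ (congrArg _ hfix)
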